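/- Let γ > 0 and β, k, α with β − kα ≥ 1 + δ for some δ > 0 (specifically ⌊β⌋+1−kα > β−kα > 1). Suppose r: [0,∞) → (0,∞) is differentiable, bounded above, and satisfies r'(t) ≥ −γ r(t)^{β−kα} − Cγ r(t)^{⌊β⌋+1−kα} + γ r(t) for some C ≥ 0. Then there exists c > 0 with r(t) ≥ c for all t ≥ 0. -/
import Mathlib


open Set

theorem stmt12 (γ C β α : ℝ) (k : ℕ) (hγ : 0 < γ) (hC : 0 ≤ C) (hk : 1 ≤ k) (hα : 0 < α)
    (hexp : 1 < β - k * α)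
    (r r' : ℝ → ℝ)
    (hderiv : ∀ t : ℝ, 0 ≤ t → HasDerivAt r (r' t) t)
    (hpos : ∀ t : ℝ, 0 ≤ t → 0 < r t)
    (hbdd : ∃ R : ℝ, ∀ t : ℝ, 0 ≤ t → r t ≤ R)
    (hineq : ∀ t : ℝ, 0 ≤ t →
      -γ * r t ^ (β - k * α) - C * γ * r t ^ ((⌊β⌋₊ : ℝ) + 1 - k * α) + γ * r t ≤ r' t) :
    ∃ c > (0 : ℝ), ∀ t : ℝ, 0 ≤ t → c ≤ r t := by
  set p := β - (k : ℝ) * α with hpdef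
  set q := (⌊β⌋₊ : ℝ) + 1 - (k : ℝ) * α with hqdef
  have hp1 : 1 < p := hexp
  have hq1 : 1 < q := by
    have h1 : β < (⌊β⌋₊ : ℝ) + 1 := Nat.lt_floor_add_one β
    have : p < q := by simp only [hpdef, hqdef]; linarith
    linarith
  have hpm : 0 < p - 1 := by linarith
  have hqm : 0 < q - 1 := by linarith
  set ε₁ := (1/4 : ℝ) ^ ((p - 1)⁻¹) with hε₁def
  set ε₂ := (1/(4*(C+1)) : ℝ) ^ ((q - 1)⁻¹) with hε₂def
  have hε₁ : 0 < ε₁ := Real.rpow_pos_of_pos (by norm_num) _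
  have hε₂ : 0 < ε₂ := Real.rpow_pos_of_pos (by positivity) _
  set ε := min ε₁ ε₂ with hεdef
  have hε : 0 < ε := lt_min hε₁ hε₂
  have key : ∀ x : ℝ, 0 < x → x ≤ ε → γ * x ^ p + C * γ * x ^ q ≤ γ * x / 2 := by
    intro x hx hxε
    have h1 : x ^ (p - 1) ≤ 1/4 := by
      calc x ^ (p - 1) ≤ ε₁ ^ (p - 1) :=
            Real.rpow_le_rpow hx.le (hxε.trans (min_le_left _ _)) hpm.le
        _ = 1/4 := by
            rw [hε₁def, ← Real.rpow_mul (by norm_num), inv_mul_cancel₀ hpm.ne',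
              Real.rpow_one]
    have h2 : C * x ^ (q - 1) ≤ 1/4 := by
      have hε₂q : ε₂ ^ (q - 1) = 1/(4*(C+1)) := by
        rw [hε₂def, ← Real.rpow_mul (by positivity), inv_mul_cancel₀ hqm.ne',
          Real.rpow_one]
      have hb : x ^ (q - 1) ≤ 1/(4*(C+1)) := by
        rw [← hε₂q]
        exact Real.rpow_le_rpow hx.le (hxε.trans (min_le_right _ _)) hqm.le
      have hC1 : (0:ℝ) < C + 1 := by linarith
      have := mul_le_mul_of_nonneg_left hb hC
      calc C * x ^ (q - 1) ≤ C * (1/(4*(C+1))) := this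
        _ ≤ 1/4 := by
            rw [mul_one_div, div_le_div_iff₀ (by positivity) (by norm_num)]
            linarith
    have hxp : x ^ p = x ^ (p - 1) * x := by
      rw [← Real.rpow_add_one hx.ne' (p - 1), sub_add_cancel]
    have hxq : x ^ q = x ^ (q - 1) * x := by
      rw [← Real.rpow_add_one hx.ne' (q - 1), sub_add_cancel]
    rw [hxp, hxq]
    have hγx : 0 < γ * x := mul_pos hγ hx
    nlinarith [mul_le_mul_of_nonneg_left h1 hγx.le, mul_le_mul_of_nonneg_left h2 hγx.le]
  have hd : ∀ t : ℝ, 0 ≤ t → r t ≤ ε → 0 < r' t := by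
    intro t ht hre
    have h1 := hineq t ht
    have h2 := key (r t) (hpos t ht) hre
    have := mul_pos hγ (hpos t ht)
    nlinarith
  refine ⟨min (r 0) ε, lt_min (hpos 0 le_rfl) hε, ?_⟩
  intro t₀ ht₀
  by_contra hlt
  push_neg at hlt
  set c := min (r 0) ε with hcdef
  have hcε : c ≤ ε := min_le_right _ _
  have hc0 : c ≤ r 0 := min_le_left _ _
  have hcont : ContinuousOn r (Icc 0 t₀) := fun x hx =>
    ((hderiv x hx.1).continuousAt).continuousWithinAt
  set S := Icc (0:ℝ) t₀ ∩ r ⁻¹' (Ici c) with hSdef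
  have hS0 : (0:ℝ) ∈ S := ⟨⟨le_rfl, ht₀⟩, hc0⟩
  have hSc : IsClosed S := hcont.preimage_isClosed_of_isClosed isClosed_Icc isClosed_Ici
  have hSb : BddAbove S := ⟨t₀, fun x hx => hx.1.2⟩
  set s := sSup S with hsdef
  have hsS : s ∈ S := hSc.csSup_mem ⟨0, hS0⟩ hSb
  have hs0 : 0 ≤ s := hsS.1.1
  have hst : s ≤ t₀ := hsS.1.2
  have hrs : c ≤ r s := hsS.2
  have hst' : s < t₀ := by
    refine lt_of_le_of_ne hst fun h => ?_
    rw [h] at hrs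
    exact absurd hrs (not_le.mpr hlt)
  have habove : ∀ x, s < x → x ≤ t₀ → r x < c := by
    intro x hsx hxt
    by_contra h
    push_neg at h
    exact absurd (le_csSup hSb ⟨⟨hs0.trans hsx.le, hxt⟩, h⟩) (not_le.mpr hsx)
  have hmono : StrictMonoOn r (Icc s t₀) := by
    apply strictMonoOn_of_deriv_pos (convex_Icc s t₀)
    · exact hcont.mono (Icc_subset_Icc hs0 le_rfl)
    · intro x hx
      rw [interior_Icc] at hx
      have hx0 : 0 ≤ x := hs0.trans hx.1.le
      rw [(hderiv x hx0).deriv]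
      exact hd x hx0 ((habove x hx.1 hx.2.le).le.trans hcε)
  have hlt' := hmono (left_mem_Icc.mpr hst) (right_mem_Icc.mpr hst) hst'
  linarith
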